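/- (Proposition 4.2.) Suppose x : [0,1] → ℂⁿ is such that w := H·x is continuously differentiable, the boundary condition W_B·(w(1), w(0)) = 0 holds, and set y := W_C·(w(1), w(0)) ∈ ℂⁿ. Then ⟨Ax, x⟩_X + ⟨x, Ax⟩_X ≥ −‖P‖·‖y‖² + Re ∫₀¹ w(ζ)* G₀ w(ζ) dζ, where ‖P‖ is the operator norm of the 2n×2n matrix P with respect to the Euclidean norm on ℂ^{2n} and ‖y‖ is the Euclidean norm of y. -/

import Mathlib

open Matrix intervalIntegral
open scoped ComplexOrder

/-- The energy inner product `⟨u,v⟩_X := (1/2)∫₀¹ u(ζ)* H(ζ) v(ζ) dζ`. -/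
noncomputable def energyInner {n : ℕ} (H : ℝ → Matrix (Fin n) (Fin n) ℂ)
    (u v : ℝ → Fin n → ℂ) : ℂ :=
  (1 / 2 : ℂ) * ∫ ζ in (0 : ℝ)..1, star (u ζ) ⬝ᵥ ((H ζ) *ᵥ v ζ)

lemma contOn_dot {n : ℕ} (M : Matrix (Fin n) (Fin n) ℂ) {u v : ℝ → Fin n → ℂ} {s : Set ℝ}
    (hu : ContinuousOn u s) (hv : ContinuousOn v s) :
    ContinuousOn (fun ζ => star (u ζ) ⬝ᵥ (M *ᵥ v ζ)) s := by
  simp only [dotProduct, Matrix.mulVec, Pi.star_apply]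
  apply continuousOn_finset_sum
  intro i _
  exact (((continuous_apply i).comp_continuousOn hu).star).mul
    (continuousOn_finset_sum _ fun j _ =>
      (((continuous_apply j).comp_continuousOn hv).const_smul (M i j)).congr
        (fun ζ _ => by simp [smul_eq_mul]))

/-- Proposition 4.2: if `w := H·x` is continuously differentiable,
`W_B (w(1), w(0)) = 0` and `y := W_C (w(1), w(0))`, then, with `(Ax)(ζ) = P₁w′(ζ) + G₀w(ζ)`,
`⟨Ax, x⟩_X + ⟨x, Ax⟩_X ≥ −‖P‖·‖y‖² + Re ∫₀¹ w(ζ)* G₀ w(ζ) dζ`, where `‖P‖` is the operator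
norm of `P` w.r.t. the Euclidean norm on `ℂ^{2n}` and `‖y‖` is the Euclidean norm of `y`. -/
theorem energy_balance_estimate
    (n : ℕ) (hn : 0 < n)
    (P₁ : Matrix (Fin n) (Fin n) ℂ) (hP₁herm : P₁.IsHermitian) (hP₁inv : IsUnit P₁)
    (G₀ : Matrix (Fin n) (Fin n) ℂ)
    (H : ℝ → Matrix (Fin n) (Fin n) ℂ)
    (hHcont : ∀ i j, ContinuousOn (fun ζ => H ζ i j) (Set.Icc 0 1))
    (hHherm : ∀ ζ ∈ Set.Icc (0 : ℝ) 1, (H ζ).IsHermitian)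
    (hHpos : ∀ ζ ∈ Set.Icc (0 : ℝ) 1, (H ζ).PosDef)
    (W_B W_C : Matrix (Fin n) (Fin n ⊕ Fin n) ℂ)
    (W_BC : Matrix (Fin n ⊕ Fin n) (Fin n ⊕ Fin n) ℂ)
    (hW_BC : W_BC = Matrix.fromRows W_B W_C)
    (hW_BCinv : IsUnit W_BC)
    (R₀ : Matrix (Fin n ⊕ Fin n) (Fin n ⊕ Fin n) ℂ)
    (hR₀ : R₀ = ((Real.sqrt 2 : ℂ))⁻¹ • Matrix.fromBlocks P₁ (-P₁) 1 1)
    (Sig : Matrix (Fin n ⊕ Fin n) (Fin n ⊕ Fin n) ℂ)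
    (hSig : Sig = Matrix.fromBlocks 0 1 1 0)
    (P : Matrix (Fin n ⊕ Fin n) (Fin n ⊕ Fin n) ℂ)
    (hP : P = (W_BC⁻¹)ᴴ * R₀ᴴ * Sig * R₀ * W_BC⁻¹)
    (x w w' : ℝ → Fin n → ℂ)
    (hw : ∀ ζ ∈ Set.Icc (0 : ℝ) 1, w ζ = (H ζ) *ᵥ x ζ)
    (hw' : ∀ ζ ∈ Set.Icc (0 : ℝ) 1, HasDerivWithinAt w (w' ζ) (Set.Icc 0 1) ζ)
    (hw'cont : ContinuousOn w' (Set.Icc 0 1))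
    (hbdry : W_B *ᵥ Sum.elim (w 1) (w 0) = 0)
    (y : Fin n → ℂ)
    (hy : y = W_C *ᵥ Sum.elim (w 1) (w 0))
    (Ax : ℝ → Fin n → ℂ)
    (hAx : ∀ ζ, Ax ζ = P₁ *ᵥ w' ζ + G₀ *ᵥ w ζ) :
    -‖Matrix.toEuclideanCLM (𝕜 := ℂ) P‖ *
        ‖(EuclideanSpace.equiv (Fin n) ℂ).symm y‖ ^ 2
      + (∫ ζ in (0 : ℝ)..1, star (w ζ) ⬝ᵥ (G₀ *ᵥ w ζ)).re ≤
    (energyInner H Ax x + energyInner H x Ax).re := by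
  have h01 : (0:ℝ) ≤ 1 := zero_le_one
  have huIcc : Set.uIcc (0:ℝ) 1 = Set.Icc 0 1 := Set.uIcc_of_le h01
  have hwc : ContinuousOn w (Set.Icc (0:ℝ) 1) := fun ζ hζ => (hw' ζ hζ).continuousWithinAt
  -- notation
  set g₁ : ℝ → ℂ := fun ζ => star (w' ζ) ⬝ᵥ (P₁ *ᵥ w ζ) with hg₁def
  set g₂ : ℝ → ℂ := fun ζ => star (w ζ) ⬝ᵥ (P₁ *ᵥ w' ζ) with hg₂def
  set d : ℝ → ℂ := fun ζ => star (w ζ) ⬝ᵥ (G₀ *ᵥ w ζ) with hddef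
  set D : ℂ := ∫ ζ in (0:ℝ)..1, d ζ with hDdef
  set v : Fin n ⊕ Fin n → ℂ := Sum.elim (0 : Fin n → ℂ) y with hvdef
  -- integrability
  have hint : ∀ {F : ℝ → ℂ}, ContinuousOn F (Set.Icc 0 1) →
      IntervalIntegrable F MeasureTheory.volume 0 1 := fun h =>
    ContinuousOn.intervalIntegrable (by rwa [huIcc])
  have hg₁I : IntervalIntegrable g₁ MeasureTheory.volume 0 1 := hint (contOn_dot P₁ hw'cont hwc)
  have hg₂I : IntervalIntegrable g₂ MeasureTheory.volume 0 1 := hint (contOn_dot P₁ hwc hw'cont)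
  have hdI : IntervalIntegrable d MeasureTheory.volume 0 1 := hint (contOn_dot G₀ hwc hwc)
  have hsdI : IntervalIntegrable (fun ζ => star (d ζ)) MeasureTheory.volume 0 1 :=
    hint ((contOn_dot G₀ hwc hwc).star)
  -- FTC for the P₁-part
  have hcomp : ∀ ζ ∈ Set.Icc (0:ℝ) 1, ∀ i,
      HasDerivWithinAt (fun t => w t i) (w' ζ i) (Set.Icc 0 1) ζ :=
    fun ζ hζ i => hasDerivWithinAt_pi.1 (hw' ζ hζ) i
  have hfun : (fun t => star (w t) ⬝ᵥ (P₁ *ᵥ w t))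
      = fun t => ∑ i, star (w t i) * ∑ j, P₁ i j * w t j := by
    funext t; simp [dotProduct, Matrix.mulVec, Pi.star_apply]
  have hfderiv : ∀ ζ ∈ Set.Icc (0:ℝ) 1, HasDerivWithinAt (fun t => star (w t) ⬝ᵥ (P₁ *ᵥ w t))
      (g₁ ζ + g₂ ζ) (Set.Icc 0 1) ζ := by
    intro ζ hζ
    rw [hfun]
    have h1 : HasDerivWithinAt (fun t => ∑ i, star (w t i) * ∑ j, P₁ i j * w t j)
        (∑ i, (star (w' ζ i) * ∑ j, P₁ i j * w ζ j + star (w ζ i) * ∑ j, P₁ i j * w' ζ j))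
        (Set.Icc 0 1) ζ := by
      refine HasDerivWithinAt.fun_sum fun i _ => ?_
      exact ((hcomp ζ hζ i).star).mul (HasDerivWithinAt.fun_sum fun j _ => ((hcomp ζ hζ j).const_mul _))
    have hval : g₁ ζ + g₂ ζ
        = ∑ i, (star (w' ζ i) * ∑ j, P₁ i j * w ζ j + star (w ζ i) * ∑ j, P₁ i j * w' ζ j) := by
      simp [hg₁def, hg₂def, dotProduct, Matrix.mulVec, Pi.star_apply,
        Finset.sum_add_distrib]
    rw [hval]; exact h1
  have hFTC : ∫ ζ in (0:ℝ)..1, (g₁ ζ + g₂ ζ)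
      = star (w 1) ⬝ᵥ (P₁ *ᵥ w 1) - star (w 0) ⬝ᵥ (P₁ *ᵥ w 0) := by
    apply intervalIntegral.integral_eq_sub_of_hasDeriv_right_of_le
        (f := fun t => star (w t) ⬝ᵥ (P₁ *ᵥ w t)) h01
    · exact contOn_dot P₁ hwc hwc
    · intro ζ hζ
      exact ((hfderiv ζ (Set.mem_Icc_of_Ioo hζ)).hasDerivAt
        (Icc_mem_nhds hζ.1 hζ.2)).hasDerivWithinAt
    · exact hg₁I.add hg₂I
  -- block identity
  have hD0 : R₀ᴴ * Sig * R₀ = Matrix.fromBlocks P₁ 0 0 (-P₁) := by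
    have h2 : ((Real.sqrt 2 : ℝ) : ℂ) * ((Real.sqrt 2 : ℝ) : ℂ) = 2 := by
      rw [← Complex.ofReal_mul, Real.mul_self_sqrt (by norm_num)]
      norm_num
    have hstar : star (((Real.sqrt 2 : ℝ) : ℂ))⁻¹ = (((Real.sqrt 2 : ℝ) : ℂ))⁻¹ := by
      simp [star_inv₀]
    rw [hR₀, hSig]
    rw [conjTranspose_smul, Matrix.fromBlocks_conjTranspose]
    rw [Matrix.smul_mul, Matrix.mul_smul, Matrix.smul_mul, smul_smul]
    rw [hstar]
    rw [Matrix.fromBlocks_multiply, Matrix.fromBlocks_multiply]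
    have hPh : P₁ᴴ = P₁ := hP₁herm
    have hinv2 : (((Real.sqrt 2 : ℝ) : ℂ))⁻¹ * (((Real.sqrt 2 : ℝ) : ℂ))⁻¹ = 2⁻¹ := by
      rw [← mul_inv, h2]
    rw [hinv2]
    simp only [hPh, Matrix.conjTranspose_neg, Matrix.mul_one, Matrix.one_mul,
      Matrix.mul_zero, Matrix.zero_mul]
    ext i j
    cases i <;> cases j <;>
      simp [Matrix.fromBlocks, Matrix.smul_apply, Matrix.add_apply, Matrix.neg_apply] <;> ring
  -- boundary algebra
  have hdet : IsUnit W_BC.det := (Matrix.isUnit_iff_isUnit_det W_BC).1 hW_BCinv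
  have hP' : P = (W_BC⁻¹)ᴴ * (Matrix.fromBlocks P₁ 0 0 (-P₁)) * W_BC⁻¹ := by
    rw [hP, ← hD0]; simp only [Matrix.mul_assoc]
  have hbd : star (w 1) ⬝ᵥ (P₁ *ᵥ w 1) - star (w 0) ⬝ᵥ (P₁ *ᵥ w 0)
      = star v ⬝ᵥ (P *ᵥ v) := by
    set z : Fin n ⊕ Fin n → ℂ := Sum.elim (w 1) (w 0) with hz
    have hv : v = W_BC *ᵥ z := by
      rw [hvdef, hW_BC, Matrix.fromRows_mulVec, hbdry, hy]
    rw [hv]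
    have h1 : P *ᵥ (W_BC *ᵥ z) = (W_BC⁻¹)ᴴ *ᵥ ((Matrix.fromBlocks P₁ 0 0 (-P₁)) *ᵥ z) := by
      rw [Matrix.mulVec_mulVec, hP', Matrix.mul_assoc, Matrix.mul_assoc,
        Matrix.nonsing_inv_mul _ hdet, Matrix.mul_one, ← Matrix.mulVec_mulVec]
    have h2 : star (W_BC *ᵥ z) ⬝ᵥ ((W_BC⁻¹)ᴴ *ᵥ ((Matrix.fromBlocks P₁ 0 0 (-P₁)) *ᵥ z))
        = star z ⬝ᵥ ((Matrix.fromBlocks P₁ 0 0 (-P₁)) *ᵥ z) := by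
      rw [Matrix.dotProduct_mulVec, ← Matrix.star_mulVec, Matrix.mulVec_mulVec,
        Matrix.nonsing_inv_mul _ hdet, Matrix.one_mulVec]
    rw [h1, h2]
    simp [hz, Matrix.fromBlocks_mulVec, dotProduct, Fintype.sum_sum_type,
      Matrix.mulVec, sub_eq_add_neg]
  -- energy inner product rewrites
  have hE1 : energyInner H Ax x = (1/2 : ℂ) * ∫ ζ in (0:ℝ)..1, (g₁ ζ + star (d ζ)) := by
    unfold energyInner
    congr 1
    apply intervalIntegral.integral_congr
    intro ζ hζ
    rw [huIcc] at hζ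
    show star (Ax ζ) ⬝ᵥ (H ζ *ᵥ x ζ) = _
    rw [← hw ζ hζ, hAx ζ, star_add, add_dotProduct, Matrix.star_mulVec,
      hP₁herm.eq, ← Matrix.dotProduct_mulVec]
    have hcd : star (G₀ *ᵥ w ζ) ⬝ᵥ w ζ = star (star (w ζ) ⬝ᵥ (G₀ *ᵥ w ζ)) := by
      simp [dotProduct, Pi.star_apply, star_sum, mul_comm]
    rw [hcd]
  have hE2 : energyInner H x Ax = (1/2 : ℂ) * ∫ ζ in (0:ℝ)..1, (g₂ ζ + d ζ) := by
    unfold energyInner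
    congr 1
    apply intervalIntegral.integral_congr
    intro ζ hζ
    rw [huIcc] at hζ
    have hsw : star (x ζ) ᵥ* H ζ = star (w ζ) := by
      rw [hw ζ hζ, Matrix.star_mulVec, (hHherm ζ hζ).eq]
    show star (x ζ) ⬝ᵥ (H ζ *ᵥ Ax ζ) = _
    rw [Matrix.dotProduct_mulVec, hsw, hAx ζ, dotProduct_add]
  -- conjugated integral
  have hconj : (∫ ζ in (0:ℝ)..1, star (d ζ)) = star D := by
    rw [hDdef, intervalIntegral.integral_of_le h01, intervalIntegral.integral_of_le h01]
    exact integral_conj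
  -- combine
  have hgsum : (∫ ζ in (0:ℝ)..1, g₁ ζ) + (∫ ζ in (0:ℝ)..1, g₂ ζ) = star v ⬝ᵥ (P *ᵥ v) := by
    rw [← intervalIntegral.integral_add hg₁I hg₂I, hFTC, hbd]
  have hEsum : energyInner H Ax x + energyInner H x Ax
      = (1/2 : ℂ) * ((star v ⬝ᵥ (P *ᵥ v)) + (star D + D)) := by
    rw [hE1, hE2, intervalIntegral.integral_add hg₁I hsdI,
      intervalIntegral.integral_add hg₂I hdI, hconj, ← hgsum]
    ring
  have hre : (energyInner H Ax x + energyInner H x Ax).re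
      = ((1/2 : ℂ) * (star v ⬝ᵥ (P *ᵥ v))).re + D.re := by
    rw [hEsum]
    have hsplit : (1/2 : ℂ) * ((star v ⬝ᵥ (P *ᵥ v)) + (star D + D))
        = (1/2 : ℂ) * (star v ⬝ᵥ (P *ᵥ v)) + (1/2 : ℂ) * (star D + D) := by ring
    rw [hsplit, Complex.add_re]
    congr 1
    have : star D + D = ((2 : ℝ) * D.re : ℂ) := by
      rw [Complex.star_def, add_comm, Complex.add_conj]
      push_cast
      ring
    rw [this]
    simp [Complex.mul_re]
  rw [hre]
  refine add_le_add ?_ le_rfl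
  -- final norm bound
  set u : EuclideanSpace ℂ (Fin n ⊕ Fin n) := (WithLp.equiv 2 _).symm v with hu
  set T := Matrix.toEuclideanCLM (𝕜 := ℂ) P with hT
  have hB : star v ⬝ᵥ (P *ᵥ v) = inner ℂ u (T u) := by
    rw [hT, hu, WithLp.equiv_symm_apply, Matrix.toEuclideanCLM_toLp, EuclideanSpace.inner_toLp_toLp,
      dotProduct_comm]
  have hnorm : ‖u‖ = ‖(EuclideanSpace.equiv (Fin n) ℂ).symm y‖ := by
    rw [EuclideanSpace.norm_eq, EuclideanSpace.norm_eq]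
    congr 1
    rw [Fintype.sum_sum_type]
    simp [hu, hvdef]
  have h1 : ‖(inner ℂ u (T u) : ℂ)‖ ≤ ‖T‖ * ‖u‖ ^ 2 := by
    calc ‖(inner ℂ u (T u) : ℂ)‖ ≤ ‖u‖ * ‖T u‖ := norm_inner_le_norm u (T u)
    _ ≤ ‖u‖ * (‖T‖ * ‖u‖) := by
        have := T.le_opNorm u
        nlinarith [norm_nonneg u, norm_nonneg (T u)]
    _ = ‖T‖ * ‖u‖ ^ 2 := by ring
  have h2 : -(‖T‖ * ‖u‖ ^ 2) ≤ (inner ℂ u (T u) : ℂ).re := by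
    have habs0 := Complex.abs_re_le_norm (inner ℂ u (T u) : ℂ)
    have habs : |((inner ℂ u (T u) : ℂ)).re| ≤ ‖T‖ * ‖u‖ ^ 2 :=
      le_trans (by simpa using habs0) h1
    linarith [neg_abs_le ((inner ℂ u (T u) : ℂ)).re]
  have hpos : 0 ≤ ‖T‖ * ‖u‖ ^ 2 := by positivity
  rw [hB]
  have hreh : ((1/2 : ℂ) * (inner ℂ u (T u) : ℂ)).re = (1/2) * ((inner ℂ u (T u) : ℂ)).re := by
    simp [Complex.mul_re]
  rw [hreh, ← hnorm]
  linarith
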